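/- For every real C ≥ 2, the function Δ_C is strictly decreasing on the interval [C, ∞): for all reals f₁, f₂ with C ≤ f₁ < f₂, one has Δ_C(f₂) < Δ_C(f₁). (Lemma 2 of the paper: the entropy difference H(P₂) − H(P₁) is monotonically decreasing in f = f_max when C ≥ 2.) -/

import Mathlib

/-- For a real parameter `C`, the entropy difference
`Δ_C(f) = f·log f + (f−C)·log(f−C) − (f−1)·log(f−1) − (f−C+1)·log(f−C+1)`. -/
noncomputable def Delta (C f : ℝ) : ℝ :=
  f * Real.log f + (f - C) * Real.log (f - C)
    - (f - 1) * Real.log (f - 1) - (f - C + 1) * Real.log (f - C + 1)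

lemma delta_continuous (C : ℝ) : Continuous (Delta C) := by
  have h := Real.continuous_mul_log
  have h1 : Continuous fun f : ℝ => f * Real.log f := h
  have h2 : Continuous fun f : ℝ => (f - C) * Real.log (f - C) :=
    h.comp (continuous_id.sub continuous_const)
  have h3 : Continuous fun f : ℝ => (f - 1) * Real.log (f - 1) :=
    h.comp (continuous_id.sub continuous_const)
  have h4 : Continuous fun f : ℝ => (f - C + 1) * Real.log (f - C + 1) :=
    h.comp ((continuous_id.sub continuous_const).add continuous_const)
  exact ((h1.add h2).sub h3).sub h4

lemma delta_hasDerivAt (C x : ℝ) (hC : 2 ≤ C) (hx : C < x) :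
    HasDerivAt (Delta C)
      (Real.log x + Real.log (x - C) - Real.log (x - 1) - Real.log (x - C + 1)) x := by
  have hx0 : x ≠ 0 := by linarith
  have hxC : x - C ≠ 0 := by linarith
  have hx1 : x - 1 ≠ 0 := by linarith
  have hxC1 : x - C + 1 ≠ 0 := by linarith
  have d1 : HasDerivAt (fun f : ℝ => f * Real.log f) (Real.log x + 1) x :=
    Real.hasDerivAt_mul_log hx0
  have d2 : HasDerivAt (fun f : ℝ => (f - C) * Real.log (f - C))
      (Real.log (x - C) + 1) x := by
    have := (Real.hasDerivAt_mul_log hxC).comp x ((hasDerivAt_id x).sub_const C)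
    simpa [Function.comp_def] using this
  have d3 : HasDerivAt (fun f : ℝ => (f - 1) * Real.log (f - 1))
      (Real.log (x - 1) + 1) x := by
    have := (Real.hasDerivAt_mul_log hx1).comp x ((hasDerivAt_id x).sub_const 1)
    simpa [Function.comp_def] using this
  have d4 : HasDerivAt (fun f : ℝ => (f - C + 1) * Real.log (f - C + 1))
      (Real.log (x - C + 1) + 1) x := by
    have := (Real.hasDerivAt_mul_log hxC1).comp x
      (((hasDerivAt_id x).sub_const C).add_const 1)
    simpa [Function.comp_def] using this
  have := ((d1.add d2).sub d3).sub d4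
  exact this.congr_deriv (by ring)

/-- Lemma 2 of the paper: for every `C ≥ 2`, `Δ_C` is strictly decreasing on `[C, ∞)`. -/
theorem delta_strictAnti (C : ℝ) (hC : 2 ≤ C) :
    ∀ f₁ f₂ : ℝ, C ≤ f₁ → f₁ < f₂ → Delta C f₂ < Delta C f₁ := by
  have key : StrictAntiOn (Delta C) (Set.Ici C) := by
    apply strictAntiOn_of_deriv_neg (convex_Ici C) (delta_continuous C).continuousOn
    intro x hx
    rw [interior_Ici] at hx
    have hx' : C < x := hx
    rw [(delta_hasDerivAt C x hC hx').deriv]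
    have hpos1 : 0 < x := by linarith
    have hpos2 : 0 < x - C := by linarith
    have hpos3 : 0 < x - 1 := by linarith
    have hpos4 : 0 < x - C + 1 := by linarith
    have hmul : x * (x - C) < (x - 1) * (x - C + 1) := by nlinarith
    have hlog : Real.log (x * (x - C)) < Real.log ((x - 1) * (x - C + 1)) :=
      Real.log_lt_log (by positivity) hmul
    rw [Real.log_mul (ne_of_gt hpos1) (ne_of_gt hpos2),
        Real.log_mul (ne_of_gt hpos3) (ne_of_gt hpos4)] at hlog
    linarith
  intro f₁ f₂ h1 h2
  exact key (by exact h1) (by exact le_of_lt (lt_of_le_of_lt h1 h2)) h2
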